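/- With the estimator h of x x^T defined by h[i,i] = (x_i^2 / P[i \in B]) 1{i \in B} and h[i,j] = (x_i x_j / P[i,j \in B]) 1{i,j \in B} for i \ne j, where B is the random k-subset from the algorithm-dependent sampling scheme with first index drawn from q = (|w_1|/||w||_1, ..., |w_d|/||w||_1), setting v = w and z = h w - (x x^T) w, the conditional second moment satisfies E[z_i^2] \le (2(d-1)/(k-1)) ||w||_1^2 for each i. -/

import Mathlib

open Finset

lemma aux_diag (p b w₁ M : ℝ) (hp : 0 < p) (hb : |b| ≤ 1) (hwM : |w₁| ≤ M * p) :
    (b / p * w₁) * (b / p * w₁) * (p - p * p) ≤ M * |w₁| := by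
  have hM : 0 ≤ M * p := (abs_nonneg _).trans hwM
  have hM0 : 0 ≤ M := by by_contra h; push_neg at h; nlinarith
  have hb2 : b ^ 2 ≤ 1 := by
    calc b ^ 2 = |b| * |b| := by rw [sq, ← abs_mul_abs_self]
      _ ≤ 1 * 1 := by gcongr <;> exact abs_nonneg _
      _ = 1 := one_mul 1
  have he : (b / p * w₁) * (b / p * w₁) * (p - p * p) = b ^ 2 * w₁ ^ 2 * ((1 - p) / p) := by
    field_simp
  rw [he]
  rcases le_or_gt (1 - p) 0 with h | h
  · have : b ^ 2 * w₁ ^ 2 * ((1 - p) / p) ≤ 0 :=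
      mul_nonpos_of_nonneg_of_nonpos (by positivity) (div_nonpos_of_nonpos_of_nonneg h hp.le)
    exact this.trans (by positivity)
  · have h0 : 0 ≤ (1 - p) / p := div_nonneg h.le hp.le
    have h1 : b ^ 2 * w₁ ^ 2 * ((1 - p) / p) ≤ 1 * w₁ ^ 2 * ((1 - p) / p) :=
      mul_le_mul_of_nonneg_right (mul_le_mul_of_nonneg_right hb2 (sq_nonneg w₁)) h0
    have h1' : 1 * w₁ ^ 2 * ((1 - p) / p) ≤ 1 * w₁ ^ 2 * (1 / p) := by
      have : (1 - p) / p ≤ 1 / p := by gcongr; linarith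
      exact mul_le_mul_of_nonneg_left this (by positivity)
    have h2 : 1 * w₁ ^ 2 * (1 / p) ≤ M * |w₁| := by
      rw [one_mul, mul_one_div, div_le_iff₀ hp]
      calc w₁ ^ 2 = |w₁| * |w₁| := by rw [sq, ← abs_mul_abs_self]
        _ ≤ |w₁| * (M * p) := by gcongr
        _ = M * |w₁| * p := by ring
    exact (h1.trans h1').trans h2

lemma aux_off (pj pr bj br wj wr Jv A : ℝ) (hpj : 0 < pj) (hpr : 0 < pr)
    (hbj : |bj| ≤ 1) (hbr : |br| ≤ 1) (hJ0 : 0 ≤ Jv) (hJA : Jv ≤ A * (pj * pr)) (hA : 1 ≤ A) :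
    (bj / pj * wj) * (br / pr * wr) * (Jv - pj * pr) ≤ A * (|wj| * |wr|) := by
  have hpp : 0 < pj * pr := mul_pos hpj hpr
  have habs : |Jv - pj * pr| ≤ A * (pj * pr) := by
    rw [abs_le]; constructor <;> nlinarith
  calc (bj / pj * wj) * (br / pr * wr) * (Jv - pj * pr)
      ≤ |(bj / pj * wj) * (br / pr * wr) * (Jv - pj * pr)| := le_abs_self _
    _ = (|bj| * |wj| * (|br| * |wr|)) * (|Jv - pj * pr| / (pj * pr)) := by
        rw [abs_mul, abs_mul, abs_mul, abs_mul, abs_div, abs_div,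
          abs_of_pos hpj, abs_of_pos hpr]
        field_simp
    _ ≤ (1 * |wj| * (1 * |wr|)) * (A * (pj * pr) / (pj * pr)) := by
        gcongr <;> first | exact abs_nonneg _ | positivity
    _ = A * (|wj| * |wr|) := by
        rw [mul_div_assoc, div_self hpp.ne']; ring

set_option maxHeartbeats 1000000 in
/-- Variance bound for the algorithm-dependent sampling scheme.  `μ` is the distribution
of the random `k`-subset `B` of `[d]`; `P1 i = P[i ∈ B]` and `P2 i j = P[i,j ∈ B]` are its
single and pairwise inclusion probabilities, which are given by the closed-form expressions
of the scheme whose first index is drawn proportionally to `|w_i|`; the triple-inclusion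
ratio bound `P[i,j,r ∈ B] ≤ ((d-1)/(k-1)) P[i,j ∈ B] P[i,r ∈ B]` holds.  Then for the
importance-weighted estimator `h` of `x xᵀ` and `z = h w - (x xᵀ) w`, the second moment
satisfies `E[z_i²] ≤ (2(d-1)/(k-1)) ‖w‖₁²`. -/
theorem stmt_15 (d k : ℕ) (hk : 3 ≤ k) (hkd : k ≤ d)
    (x w : Fin d → ℝ) (hx : ∀ i, |x i| ≤ 1) (hw : w ≠ 0)
    (μ : Finset (Fin d) → ℝ) (hμ0 : ∀ B, 0 ≤ μ B) (hμ1 : ∑ B : Finset (Fin d), μ B = 1)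
    (P1 : Fin d → ℝ) (P2 : Fin d → Fin d → ℝ)
    (hP1μ : ∀ i : Fin d, ∑ B ∈ univ.filter (fun B : Finset (Fin d) => i ∈ B), μ B = P1 i)
    (hP2μ : ∀ i j : Fin d, i ≠ j →
      ∑ B ∈ univ.filter (fun B : Finset (Fin d) => i ∈ B ∧ j ∈ B), μ B = P2 i j)
    (hP1f : ∀ i : Fin d, P1 i =
      (((d : ℝ) - k) / ((d : ℝ) - 1)) * (|w i| / ∑ l, |w l|) + ((k : ℝ) - 1) / ((d : ℝ) - 1))
    (hP2f : ∀ i j : Fin d, i ≠ j → P2 i j =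
      ((k : ℝ) - 1) * ((k : ℝ) - 2) / (((d : ℝ) - 1) * ((d : ℝ) - 2)) +
        ((k : ℝ) - 1) * ((d : ℝ) - k) / (((d : ℝ) - 1) * ((d : ℝ) - 2)) *
          (|w i| / ∑ l, |w l| + |w j| / ∑ l, |w l|))
    (htriple : ∀ i j r : Fin d, i ≠ j → i ≠ r → j ≠ r →
      ∑ B ∈ univ.filter (fun B : Finset (Fin d) => i ∈ B ∧ j ∈ B ∧ r ∈ B), μ B ≤
        ((d : ℝ) - 1) / ((k : ℝ) - 1) * (P2 i j * P2 i r))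
    (i : Fin d) :
    ∑ B : Finset (Fin d), μ B *
        ((∑ j, (if i = j then (x i ^ 2 / P1 i) * (if i ∈ B then (1 : ℝ) else 0)
                else (x i * x j / P2 i j) * (if i ∈ B ∧ j ∈ B then (1 : ℝ) else 0)) * w j
            - x i * ∑ j, x j * w j) ^ 2)
      ≤ 2 * ((d : ℝ) - 1) / ((k : ℝ) - 1) * (∑ l, |w l|) ^ 2 := by
  classical
  have hk3 : (3:ℝ) ≤ (k:ℝ) := by exact_mod_cast hk
  have hdk : (k:ℝ) ≤ (d:ℝ) := by exact_mod_cast hkd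
  have hk1 : (0:ℝ) < (k:ℝ) - 1 := by linarith
  have hk2 : (0:ℝ) < (k:ℝ) - 2 := by linarith
  have hd1 : (0:ℝ) < (d:ℝ) - 1 := by linarith
  have hd2 : (0:ℝ) < (d:ℝ) - 2 := by linarith
  have hdk0 : (0:ℝ) ≤ (d:ℝ) - (k:ℝ) := by linarith
  set A : ℝ := ((d:ℝ) - 1) / ((k:ℝ) - 1) with hA
  have hA1 : (1:ℝ) ≤ A := by rw [hA, le_div_iff₀ hk1]; linarith
  have hA0 : (0:ℝ) < A := lt_of_lt_of_le one_pos hA1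
  set W : ℝ := ∑ l, |w l| with hWdef
  have hW0 : 0 < W := by
    obtain ⟨l, hl⟩ := Function.ne_iff.mp hw
    exact Finset.sum_pos' (fun _ _ => abs_nonneg _) ⟨l, mem_univ l, abs_pos.mpr hl⟩
  have hWne : W ≠ 0 := hW0.ne'
  have hq1 : ∀ j, |w j| ≤ W := fun j =>
    Finset.single_le_sum (fun l _ => abs_nonneg (w l)) (mem_univ j)
  -- P1 facts
  have hP1lb : ((k:ℝ) - 1) / ((d:ℝ) - 1) ≤ P1 i := by
    rw [hP1f i]
    have h1 : 0 ≤ (((d:ℝ) - k) / ((d:ℝ) - 1)) * (|w i| / W) :=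
      mul_nonneg (div_nonneg hdk0 hd1.le) (div_nonneg (abs_nonneg _) hW0.le)
    linarith
  have hP1pos : 0 < P1 i := lt_of_lt_of_le (div_pos hk1 hd1) hP1lb
  have hAinv : A * (((k:ℝ) - 1) / ((d:ℝ) - 1)) = 1 := by
    field_simp [hA]
    rw [hA, div_mul_cancel₀ _ hk1.ne']
  have hAP1 : 1 ≤ A * P1 i := by
    rw [← hAinv]
    gcongr
  -- P2 facts
  have hP2pos : ∀ j, i ≠ j → 0 < P2 i j := by
    intro j hij
    rw [hP2f i j hij]
    have h1 : 0 < ((k:ℝ) - 1) * ((k:ℝ) - 2) / (((d:ℝ) - 1) * ((d:ℝ) - 2)) :=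
      div_pos (mul_pos hk1 hk2) (mul_pos hd1 hd2)
    have h2 : 0 ≤ ((k:ℝ) - 1) * ((d:ℝ) - k) / (((d:ℝ) - 1) * ((d:ℝ) - 2)) *
        (|w i| / W + |w j| / W) :=
      mul_nonneg (div_nonneg (mul_nonneg hk1.le hdk0) (mul_pos hd1 hd2).le)
        (add_nonneg (div_nonneg (abs_nonneg _) hW0.le) (div_nonneg (abs_nonneg _) hW0.le))
    linarith
  have hP2key : ∀ j, i ≠ j → |w j| ≤ (A * W) * P2 i j := by
    intro j hij
    rw [hP2f i j hij, hA]
    have expand : (((d:ℝ) - 1) / ((k:ℝ) - 1)) * W *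
        (((k:ℝ) - 1) * ((k:ℝ) - 2) / (((d:ℝ) - 1) * ((d:ℝ) - 2)) +
          ((k:ℝ) - 1) * ((d:ℝ) - k) / (((d:ℝ) - 1) * ((d:ℝ) - 2)) * (|w i| / W + |w j| / W))
        = (((k:ℝ) - 2) * W + ((d:ℝ) - k) * (|w i| + |w j|)) / ((d:ℝ) - 2) := by
      field_simp
    rw [expand, le_div_iff₀ hd2]
    have h1 := hq1 j
    have h2 : 0 ≤ |w i| := abs_nonneg _
    nlinarith [abs_nonneg (w j)]
  have hP1key : |w i| ≤ (A * W) * P1 i := by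
    calc |w i| ≤ W := hq1 i
      _ = W * 1 := (mul_one W).symm
      _ ≤ W * (A * P1 i) := by gcongr
      _ = (A * W) * P1 i := by ring
  -- abbreviations
  set c : Fin d → ℝ := fun j => if i = j then x i ^ 2 / P1 i else x i * x j / P2 i j with hc
  set P : Fin d → ℝ := fun j => if i = j then P1 i else P2 i j with hP
  set g : Finset (Fin d) → Fin d → ℝ := fun B j =>
    if i = j then (if i ∈ B then (1:ℝ) else 0) else (if i ∈ B ∧ j ∈ B then (1:ℝ) else 0) with hg
  have hPpos : ∀ j, 0 < P j := by
    intro j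
    by_cases h : i = j
    · simp only [hP, if_pos h]; exact hP1pos
    · simp only [hP, if_neg h]; exact hP2pos j h
  have hPkey : ∀ j, |w j| ≤ (A * W) * P j := by
    intro j
    by_cases h : i = j
    · simp only [hP, if_pos h]; subst h; exact hP1key
    · simp only [hP, if_neg h]; exact hP2key j h
  have hcP : ∀ j, c j * P j = x i * x j := by
    intro j
    by_cases h : i = j
    · simp only [hc, hP, if_pos h]
      subst h
      rw [div_mul_cancel₀ _ hP1pos.ne', sq]
    · simp only [hc, hP, if_neg h]
      rw [div_mul_cancel₀ _ (hP2pos j h).ne']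
  have hcPabs : ∀ j, |c j * P j| ≤ 1 := by
    intro j
    rw [hcP j, abs_mul]
    calc |x i| * |x j| ≤ 1 * 1 := by gcongr <;> first | exact abs_nonneg _ | exact hx _
      _ = 1 := one_mul 1
  have hc_eq : ∀ j, c j = (c j * P j) / P j := by
    intro j
    rw [mul_div_assoc, div_self (hPpos j).ne', mul_one]
  -- marginals
  have hM : ∀ j, (∑ B : Finset (Fin d), μ B * g B j) = P j := by
    intro j
    by_cases h : i = j
    · subst h
      simp only [hg, hP, if_pos rfl]
      rw [← hP1μ i, Finset.sum_filter]
      exact Finset.sum_congr rfl fun B _ => by split <;> simp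
    · simp only [hg, hP, if_neg h]
      rw [← hP2μ i j h, Finset.sum_filter]
      exact Finset.sum_congr rfl fun B _ => by split <;> simp
  have hg0 : ∀ B j, 0 ≤ g B j := by
    intro B j
    simp only [hg]
    split <;> split <;> norm_num
  have hJ0 : ∀ j r, 0 ≤ ∑ B : Finset (Fin d), μ B * (g B j * g B r) := by
    intro j r
    exact Finset.sum_nonneg fun B _ =>
      mul_nonneg (hμ0 B) (mul_nonneg (hg0 B j) (hg0 B r))
  have hJdiag : ∀ j, (∑ B : Finset (Fin d), μ B * (g B j * g B j)) = P j := by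
    intro j
    rw [← hM j]
    refine Finset.sum_congr rfl fun B _ => ?_
    congr 1
    simp only [hg]
    split <;> split <;> norm_num
  have hJi : ∀ r, i ≠ r → (∑ B : Finset (Fin d), μ B * (g B i * g B r)) = P2 i r := by
    intro r hir
    rw [← hP2μ i r hir, Finset.sum_filter]
    refine Finset.sum_congr rfl fun B _ => ?_
    simp only [hg, if_pos rfl, if_neg hir]
    by_cases h1 : i ∈ B <;> by_cases h2 : r ∈ B <;> simp [h1, h2]
  have hJri : ∀ j, i ≠ j → (∑ B : Finset (Fin d), μ B * (g B j * g B i)) = P2 i j := by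
    intro j hij
    rw [← hP2μ i j hij, Finset.sum_filter]
    refine Finset.sum_congr rfl fun B _ => ?_
    simp only [hg, if_pos rfl, if_neg hij]
    by_cases h1 : i ∈ B <;> by_cases h2 : j ∈ B <;> simp [h1, h2]
  have hJd : ∀ j r, i ≠ j → i ≠ r → j ≠ r →
      (∑ B : Finset (Fin d), μ B * (g B j * g B r)) ≤ A * (P2 i j * P2 i r) := by
    intro j r hij hir hjr
    have e : (∑ B : Finset (Fin d), μ B * (g B j * g B r)) =
        ∑ B ∈ univ.filter (fun B : Finset (Fin d) => i ∈ B ∧ j ∈ B ∧ r ∈ B), μ B := by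
      rw [Finset.sum_filter]
      refine Finset.sum_congr rfl fun B _ => ?_
      simp only [hg, if_neg hij, if_neg hir]
      by_cases h1 : i ∈ B <;> by_cases h2 : j ∈ B <;> by_cases h3 : r ∈ B <;>
        simp [h1, h2, h3]
    rw [e, hA]
    exact htriple i j r hij hir hjr
  -- upper bound on joint second moments
  have hJA : ∀ j r, j ≠ r →
      (∑ B : Finset (Fin d), μ B * (g B j * g B r)) ≤ A * (P j * P r) := by
    intro j r hjr
    by_cases hij : i = j
    · subst hij
      have hir : i ≠ r := hjr
      rw [hJi r hir]
      have : P r = P2 i r := by simp only [hP, if_neg hir]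
      rw [← this]
      have hPi : P i = P1 i := by simp only [hP, if_pos rfl]
      rw [hPi]
      nlinarith [hPpos r, hAP1]
    · by_cases hir : i = r
      · subst hir
        rw [hJri j hij]
        have : P j = P2 i j := by simp only [hP, if_neg hij]
        rw [← this]
        have hPi : P i = P1 i := by simp only [hP, if_pos rfl]
        rw [hPi]
        nlinarith [hPpos j, hAP1]
      · have := hJd j r hij hir hjr
        have e1 : P j = P2 i j := by simp only [hP, if_neg hij]
        have e2 : P r = P2 i r := by simp only [hP, if_neg hir]
        rw [e1, e2]
        exact this
  -- covariance identity
  have hCov : ∀ j r, (∑ B : Finset (Fin d), μ B * ((g B j - P j) * (g B r - P r)))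
      = (∑ B : Finset (Fin d), μ B * (g B j * g B r)) - P j * P r := by
    intro j r
    have e : ∀ B : Finset (Fin d), μ B * ((g B j - P j) * (g B r - P r))
        = μ B * (g B j * g B r) - P r * (μ B * g B j) - P j * (μ B * g B r)
          + (P j * P r) * μ B := by
      intro B; ring
    rw [Finset.sum_congr rfl fun B _ => e B]
    rw [Finset.sum_add_distrib, Finset.sum_sub_distrib, Finset.sum_sub_distrib,
      ← Finset.mul_sum, ← Finset.mul_sum, ← Finset.mul_sum, hM j, hM r, hμ1]
    ring
  -- rewrite the random variable
  have hz : ∀ B : Finset (Fin d),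
      ((∑ j, (if i = j then (x i ^ 2 / P1 i) * (if i ∈ B then (1 : ℝ) else 0)
                else (x i * x j / P2 i j) * (if i ∈ B ∧ j ∈ B then (1 : ℝ) else 0)) * w j
            - x i * ∑ j, x j * w j))
      = ∑ j, (c j * w j) * (g B j - P j) := by
    intro B
    have h1 : (∑ j, (if i = j then (x i ^ 2 / P1 i) * (if i ∈ B then (1 : ℝ) else 0)
                else (x i * x j / P2 i j) * (if i ∈ B ∧ j ∈ B then (1 : ℝ) else 0)) * w j)
        = ∑ j, (c j * w j) * g B j := by
      refine Finset.sum_congr rfl fun j _ => ?_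
      by_cases h : i = j
      · subst h
        simp only [hc, hg, eq_self_iff_true, if_true]
        ring
      · simp only [hc, hg, if_neg h]
        ring
    have h2 : x i * ∑ j, x j * w j = ∑ j, (c j * w j) * P j := by
      rw [Finset.mul_sum]
      refine Finset.sum_congr rfl fun j _ => ?_
      calc x i * (x j * w j) = (x i * x j) * w j := by ring
        _ = (c j * P j) * w j := by rw [hcP j]
        _ = (c j * w j) * P j := by ring
    rw [h1, h2, ← Finset.sum_sub_distrib]
    exact Finset.sum_congr rfl fun j _ => by ring
  -- expansion of the second moment
  have hexpand : (∑ B : Finset (Fin d), μ B *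
        ((∑ j, (if i = j then (x i ^ 2 / P1 i) * (if i ∈ B then (1 : ℝ) else 0)
                else (x i * x j / P2 i j) * (if i ∈ B ∧ j ∈ B then (1 : ℝ) else 0)) * w j
            - x i * ∑ j, x j * w j) ^ 2))
      = ∑ j, ∑ r, (c j * w j) * (c r * w r) *
          ((∑ B : Finset (Fin d), μ B * (g B j * g B r)) - P j * P r) := by
    have e1 : ∀ B : Finset (Fin d), μ B *
        ((∑ j, (if i = j then (x i ^ 2 / P1 i) * (if i ∈ B then (1 : ℝ) else 0)
                else (x i * x j / P2 i j) * (if i ∈ B ∧ j ∈ B then (1 : ℝ) else 0)) * w j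
            - x i * ∑ j, x j * w j) ^ 2)
        = ∑ j, ∑ r, ((c j * w j) * (c r * w r)) *
            (μ B * ((g B j - P j) * (g B r - P r))) := by
      intro B
      rw [hz B, sq, Finset.sum_mul_sum, Finset.mul_sum]
      refine Finset.sum_congr rfl fun j _ => ?_
      rw [Finset.mul_sum]
      exact Finset.sum_congr rfl fun r _ => by ring
    rw [Finset.sum_congr rfl fun B _ => e1 B]
    rw [Finset.sum_comm]
    refine Finset.sum_congr rfl fun j _ => ?_
    rw [Finset.sum_comm]
    refine Finset.sum_congr rfl fun r _ => ?_
    rw [← Finset.mul_sum, hCov j r]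
  rw [hexpand]
  -- termwise bound
  have hterm : ∀ j r : Fin d, (c j * w j) * (c r * w r) *
      ((∑ B : Finset (Fin d), μ B * (g B j * g B r)) - P j * P r)
      ≤ (if j = r then (A * W) * |w j| else A * (|w j| * |w r|)) := by
    intro j r
    by_cases hjr : j = r
    · subst hjr
      rw [if_pos rfl, hJdiag j]
      have h := aux_diag (P j) (c j * P j) (w j) (A * W) (hPpos j) (hcPabs j) (hPkey j)
      rw [← hc_eq j] at h
      exact h
    · rw [if_neg hjr]
      have h := aux_off (P j) (P r) (c j * P j) (c r * P r) (w j) (w r)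
        (∑ B : Finset (Fin d), μ B * (g B j * g B r)) A (hPpos j) (hPpos r)
        (hcPabs j) (hcPabs r) (hJ0 j r) (hJA j r hjr) hA1
      rw [← hc_eq j, ← hc_eq r] at h
      exact h
  calc (∑ j, ∑ r, (c j * w j) * (c r * w r) *
          ((∑ B : Finset (Fin d), μ B * (g B j * g B r)) - P j * P r))
      ≤ ∑ j, ∑ r : Fin d, (if j = r then (A * W) * |w j| else A * (|w j| * |w r|)) := by
        refine Finset.sum_le_sum fun j _ => Finset.sum_le_sum fun r _ => hterm j r
    _ ≤ ∑ j, ∑ r : Fin d,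
          ((if j = r then (A * W) * |w j| else 0) + A * (|w j| * |w r|)) := by
        refine Finset.sum_le_sum fun j _ => Finset.sum_le_sum fun r _ => ?_
        by_cases h : j = r
        · subst h
          simp only [eq_self_iff_true, if_true]
          have h0 : 0 ≤ A * (|w j| * |w j|) := by positivity
          linarith
        · simp [h]
    _ = ∑ j, ((A * W) * |w j| + A * |w j| * W) := by
        refine Finset.sum_congr rfl fun j _ => ?_
        rw [Finset.sum_add_distrib, Finset.sum_ite_eq, if_pos (mem_univ j)]
        congr 1
        rw [← Finset.mul_sum, ← Finset.mul_sum, ← hWdef]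
        ring
    _ = 2 * A * W * W := by
        rw [Finset.sum_add_distrib, ← Finset.mul_sum, ← hWdef]
        have : (∑ j, A * |w j| * W) = A * W * ∑ j, |w j| := by
          rw [Finset.mul_sum]
          exact Finset.sum_congr rfl fun j _ => by ring
        rw [this, ← hWdef]
        ring
    _ = 2 * ((d:ℝ) - 1) / ((k:ℝ) - 1) * W ^ 2 := by
        rw [hA]; ring
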